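/- arXiv:2604.05031 — 6 statements merged into one kernel-verified Lean document; each statement's English description precedes it below -/
import Mathlib

section
/- Let V be a finite-dimensional complex vector space, let n ≥ 2, and let G be a connected simple graph on the index set {1,…,n}. Let {m_α} be a finite family of linear operators on V ⊗ V, and for each edge {i,j} of G let m_{α,ij} denote the operator on V^{⊗n} acting as m_α on the tensor factors i and j and as the identity elsewhere. Assume that every vector u ∈ V ⊗ V satisfying m_α u = 0 for all α is symmetric, i.e. fixed by the swap operator exchanging the two tensor factors. Then a vector ψ ∈ V^{⊗n} satisfies m_{α,ij} ψ = 0 for all α and all edges {i,j} of G if and only if ψ is invariant under the natural permutation action of the symmetric group S_n on V^{⊗n} and m_{α,i₀j₀} ψ = 0 for all α for one (equivalently, any) fixed pair of distinct indices i₀ ≠ j₀. -/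
/-- The operator on `(Fin n → Fin d) → ℂ` — the `n`-fold tensor power of the
finite-dimensional complex vector space `V = ℂ^d`, realized as functions on index
tuples — acting as the matrix `m` (an operator on `V ⊗ V ≅ ℂ^{d×d}`) on the tensor
factors in positions `i` and `j`, and as the identity on all other factors. -/
noncomputable def twoSiteAct {d n : ℕ} (m : Matrix (Fin d × Fin d) (Fin d × Fin d) ℂ)
    (i j : Fin n) (ψ : (Fin n → Fin d) → ℂ) : (Fin n → Fin d) → ℂ :=
  fun x => ∑ p : Fin d, ∑ q : Fin d,
    m (x i, x j) (p, q) * ψ (Function.update (Function.update x i p) j q)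

/-- Conjugation: acting on sites `(σ i, σ j)` at `x` equals acting on `(i, j)` at `x ∘ σ`. -/
lemma twoSiteAct_conj {d n : ℕ} (m : Matrix (Fin d × Fin d) (Fin d × Fin d) ℂ)
    (σ : Equiv.Perm (Fin n)) (i j : Fin n) (ψ : (Fin n → Fin d) → ℂ)
    (hψ : ∀ x : Fin n → Fin d, ψ (x ∘ σ) = ψ x) (x : Fin n → Fin d) :
    twoSiteAct m (σ i) (σ j) ψ x = twoSiteAct m i j ψ (x ∘ σ) := by
  unfold twoSiteAct
  refine Finset.sum_congr rfl fun p _ => Finset.sum_congr rfl fun q _ => ?_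
  have h2 : Function.update (Function.update x (σ i) p) (σ j) q ∘ ⇑σ
      = Function.update (Function.update (x ∘ ⇑σ) i p) j q := by
    rw [Function.update_comp_equiv, Function.update_comp_equiv]
    simp
  rw [← h2, hψ]
  rfl

/-- If `ψ` is killed by all `m α` at sites `i ≠ j`, then `ψ` is invariant under swapping
`i` and `j`. -/
lemma swap_invariant {d n : ℕ} {ι : Type} (m : ι → Matrix (Fin d × Fin d) (Fin d × Fin d) ℂ)
    (hsym : ∀ u : Fin d × Fin d → ℂ, (∀ α, (m α).mulVec u = 0) →
      ∀ a b : Fin d, u (a, b) = u (b, a))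
    (ψ : (Fin n → Fin d) → ℂ) (i j : Fin n) (hij : i ≠ j)
    (h : ∀ α, twoSiteAct (m α) i j ψ = 0) (x : Fin n → Fin d) :
    ψ (x ∘ Equiv.swap i j) = ψ x := by
  set u : Fin d × Fin d → ℂ := fun pq => ψ (Function.update (Function.update x i pq.1) j pq.2)
    with hu
  have hker : ∀ α, (m α).mulVec u = 0 := by
    intro α
    funext ab
    obtain ⟨a, b⟩ := ab
    have := congrFun (h α) (Function.update (Function.update x i a) j b)
    simp only [Pi.zero_apply] at this ⊢
    rw [← this]
    unfold twoSiteAct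
    rw [Matrix.mulVec, dotProduct, Fintype.sum_prod_type]
    refine Finset.sum_congr rfl fun p _ => Finset.sum_congr rfl fun q _ => ?_
    have hyi : Function.update (Function.update x i a) j b i = a := by
      rw [Function.update_of_ne hij, Function.update_self]
    have hyj : Function.update (Function.update x i a) j b j = b := Function.update_self _ _ _
    have hupd : Function.update (Function.update (Function.update (Function.update x i a) j b) i p) j q
        = Function.update (Function.update x i p) j q := by
      funext k
      simp only [Function.update_apply]
      by_cases h1 : k = j
      · simp [h1]
      by_cases h2 : k = i
      · simp [h1, h2]
      · simp [h1, h2]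
    rw [hyi, hyj, hupd]
  have h1 : x ∘ Equiv.swap i j = Function.update (Function.update x i (x j)) j (x i) := by
    funext k
    rcases eq_or_ne k i with rfl | hki
    · simp [Function.update_of_ne hij, Equiv.swap_apply_left]
    rcases eq_or_ne k j with rfl | hkj
    · simp [Equiv.swap_apply_right]
    · simp [Function.update_of_ne hki, Function.update_of_ne hkj,
        Equiv.swap_apply_of_ne_of_ne hki hkj]
  have h2 : Function.update (Function.update x i (x i)) j (x j) = x := by
    rw [Function.update_eq_self, Function.update_eq_self]
  calc ψ (x ∘ Equiv.swap i j) = u (x j, x i) := by rw [h1]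
    _ = u (x i, x j) := hsym u hker (x j) (x i)
    _ = ψ x := by
        show ψ (Function.update (Function.update x i (x i)) j (x j)) = ψ x
        rw [h2]

/-- **Lemma 1.** Let `V = ℂ^d` be a finite-dimensional complex vector space, `n ≥ 2`,
and `G` a connected simple graph on `{1,…,n}`.  Let `{m α}` be a finite family of
operators on `V ⊗ V` such that every common kernel vector is symmetric (fixed by the
swap `u(a,b) ↦ u(b,a)`).  Then `ψ ∈ V^{⊗n}` is annihilated by all `m_{α,ij}` over the
edges of `G` iff `ψ` is invariant under the permutation action of `S_n`
(`(σ • ψ)(x) = ψ(x ∘ σ)`) and is annihilated by the `m_α` acting on any one fixed pair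
of distinct sites `i₀ ≠ j₀`. -/
theorem stmt0 {d n : ℕ} (hn : 2 ≤ n) (G : SimpleGraph (Fin n)) (hG : G.Connected)
    {ι : Type} [Fintype ι] (m : ι → Matrix (Fin d × Fin d) (Fin d × Fin d) ℂ)
    (hsym : ∀ u : Fin d × Fin d → ℂ, (∀ α, (m α).mulVec u = 0) →
      ∀ a b : Fin d, u (a, b) = u (b, a))
    (ψ : (Fin n → Fin d) → ℂ) (i₀ j₀ : Fin n) (hij : i₀ ≠ j₀) :
    (∀ α, ∀ i j : Fin n, G.Adj i j → twoSiteAct (m α) i j ψ = 0) ↔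
      ((∀ σ : Equiv.Perm (Fin n), ∀ x : Fin n → Fin d, ψ (x ∘ σ) = ψ x) ∧
        ∀ α, twoSiteAct (m α) i₀ j₀ ψ = 0) := by
  -- the subgroup of permutations leaving ψ invariant
  set H : Subgroup (Equiv.Perm (Fin n)) :=
    { carrier := { σ | ∀ x : Fin n → Fin d, ψ (x ∘ σ) = ψ x }
      one_mem' := by intro x; simp
      mul_mem' := by
        intro σ τ hσ hτ x
        have : x ∘ ⇑(σ * τ) = (x ∘ σ) ∘ τ := by funext k; rfl
        rw [this, hτ, hσ]
      inv_mem' := by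
        intro σ hσ x
        have h1 := hσ (x ∘ ⇑σ⁻¹)
        have h2 : (x ∘ ⇑σ⁻¹) ∘ ⇑σ = x := by
          funext k; simp [Function.comp]
        rw [h2] at h1
        exact h1.symm } with hH
  -- there is an edge, from i₀ ≠ j₀ and connectedness
  obtain ⟨a, b, hab⟩ : ∃ a b : Fin n, G.Adj a b := by
    obtain ⟨w⟩ := hG.preconnected i₀ j₀
    cases w with
    | nil => exact absurd rfl hij
    | cons h _ => exact ⟨_, _, h⟩
  -- a permutation sending one ordered pair of distinct indices to another
  have pairperm : ∀ (a b c e : Fin n), a ≠ b → c ≠ e →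
      ∃ σ : Equiv.Perm (Fin n), σ a = c ∧ σ b = e := by
    intro a b c e hab hce
    refine ⟨Equiv.swap (Equiv.swap a c b) e * Equiv.swap a c, ?_, ?_⟩
    · have h1 : Equiv.swap a c a = c := Equiv.swap_apply_left a c
      have hb' : Equiv.swap a c b ≠ c := fun h =>
        hab (Equiv.injective _ (h1.trans h.symm))
      simp only [Equiv.Perm.mul_apply, h1]
      exact Equiv.swap_apply_of_ne_of_ne hb'.symm hce
    · simp only [Equiv.Perm.mul_apply]
      exact Equiv.swap_apply_left _ _
  constructor
  · rintro h
    -- each edge swap is in H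
    have hedge : ∀ i j : Fin n, G.Adj i j → Equiv.swap i j ∈ H := by
      intro i j hadj x
      exact swap_invariant m hsym ψ i j hadj.ne (fun α => h α i j hadj) x
    -- all swaps are in H, by walk induction
    have hswap : ∀ i j : Fin n, ∀ _w : G.Walk i j, i ≠ j → Equiv.swap i j ∈ H := by
      intro i j w
      induction w with
      | nil => exact fun h => absurd rfl h
      | @cons u v w' huv p ih =>
        intro hne
        rcases eq_or_ne v w' with rfl | hvw
        · exact hedge _ _ huv
        · have h1 : Equiv.swap v w' u = u :=
            Equiv.swap_apply_of_ne_of_ne huv.ne hne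
          have h2 : Equiv.swap v w' v = w' := Equiv.swap_apply_left v w'
          have key : Equiv.swap u w' =
              Equiv.swap v w' * Equiv.swap u v * (Equiv.swap v w')⁻¹ := by
            calc Equiv.swap u w'
                = Equiv.swap (Equiv.swap v w' u) (Equiv.swap v w' v) := by rw [h1, h2]
              _ = _ := Equiv.swap_apply_apply _ u v
          rw [key]
          exact H.mul_mem (H.mul_mem (ih hvw) (hedge _ _ huv)) (H.inv_mem (ih hvw))
    have hswap' : ∀ i j : Fin n, i ≠ j → Equiv.swap i j ∈ H := fun i j hne =>
      hswap i j (hG.preconnected i j).some hne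
    -- all permutations are in H
    have hall : ∀ σ : Equiv.Perm (Fin n), σ ∈ H := fun σ =>
      Equiv.Perm.swap_induction_on σ H.one_mem
        (fun f x y hxy hf => H.mul_mem (hswap' x y hxy) hf)
    refine ⟨fun σ x => hall σ x, fun α => ?_⟩
    obtain ⟨σ, hσa, hσb⟩ := pairperm a b i₀ j₀ hab.ne hij
    funext x
    have := twoSiteAct_conj (m α) σ a b ψ (fun x => hall σ x) x
    rw [hσa, hσb] at this
    rw [Pi.zero_apply, this, h α a b hab]
    rfl
  · rintro ⟨hinv, h0⟩ α i j hadj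
    obtain ⟨σ, hσa, hσb⟩ := pairperm i₀ j₀ i j hij hadj.ne
    funext x
    have := twoSiteAct_conj (m α) σ i₀ j₀ ψ (hinv σ) x
    rw [hσa, hσb] at this
    rw [Pi.zero_apply, this, h0 α]
    rfl
end

section
/- Let L ≥ 1 and work in M_{2^L}(ℂ) ≅ M_2(ℂ)^{⊗L}. For each j ∈ {1,…,L} let Z_j denote the matrix acting as the Pauli matrix Z = diag(1, −1) on the j-th tensor factor and as the identity on all others, and set Z_tot = Z_1 + ⋯ + Z_L. Then the set of matrices X ∈ M_{2^L}(ℂ) that commute with every unitary U satisfying U Z_tot = Z_tot U is exactly the set of polynomials in Z_tot, i.e. the linear span of {Z_tot^n : 0 ≤ n ≤ L}. -/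
open Matrix

/-- The Pauli matrix `Z = diag(1, −1)`. -/
noncomputable def PauliZ : Matrix (Fin 2) (Fin 2) ℂ := !![1, 0; 0, -1]

/-- `Z_j = I^{⊗(j−1)} ⊗ Z ⊗ I^{⊗(L−j)}`: the Pauli matrix `Z` acting on the `j`-th
tensor factor of `(ℂ²)^{⊗L}` and the identity on all other factors. -/
noncomputable def Zsite (L : ℕ) (j : Fin L) : Matrix (Fin L → Fin 2) (Fin L → Fin 2) ℂ :=
  fun x y => PauliZ (x j) (y j) * ∏ l ∈ Finset.univ.erase j, (if x l = y l then 1 else 0)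

/-- `Z_tot = Σ_{j=1}^L Z_j`. -/
noncomputable def Ztot (L : ℕ) : Matrix (Fin L → Fin 2) (Fin L → Fin 2) ℂ :=
  ∑ j, Zsite L j

namespace Stmt5Aux

variable {L : ℕ}

/-- The diagonal entry function of `Z_tot`. -/
noncomputable def dfun (L : ℕ) (x : Fin L → Fin 2) : ℂ := ∑ j, PauliZ (x j) (x j)

lemma pauliZ_off {a b : Fin 2} (h : a ≠ b) : PauliZ a b = 0 := by
  fin_cases a <;> fin_cases b <;> simp_all [PauliZ]

lemma pauliZ_diag (a : Fin 2) : PauliZ a a = if a = 1 then -1 else 1 := by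
  fin_cases a <;> simp [PauliZ]

lemma Ztot_diag (L : ℕ) : Ztot L = Matrix.diagonal (dfun L) := by
  ext x y
  by_cases h : x = y
  · subst h
    simp [Ztot, Zsite, dfun, Matrix.sum_apply]
  · rw [Matrix.diagonal_apply_ne _ h]
    rw [show Ztot L x y = ∑ j, Zsite L j x y by rw [Ztot, Matrix.sum_apply]]
    refine Finset.sum_eq_zero fun j _ => ?_
    obtain ⟨l, hl⟩ := Function.ne_iff.mp h
    unfold Zsite
    by_cases hlj : l = j
    · subst hlj
      rw [pauliZ_off hl, zero_mul]
    · refine mul_eq_zero_of_right _ ?_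
      exact Finset.prod_eq_zero (Finset.mem_erase.mpr ⟨hlj, Finset.mem_univ l⟩) (by simp [hl])

/-- The weight (number of 1's) of a configuration. -/
def wt (x : Fin L → Fin 2) : ℕ := (Finset.univ.filter fun j => x j = 1).card

lemma wt_le (x : Fin L → Fin 2) : wt x ≤ L := by
  refine le_trans (Finset.card_filter_le _ _) ?_
  simp

lemma dfun_eq (x : Fin L → Fin 2) : dfun L x = (L : ℂ) - 2 * wt x := by
  unfold dfun
  have h1 : ∀ j, PauliZ (x j) (x j) = 1 - 2 * (if x j = 1 then (1 : ℂ) else 0) := by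
    intro j
    by_cases h : x j = 1 <;> simp [pauliZ_diag, h] <;> norm_num
  rw [Finset.sum_congr rfl fun j _ => h1 j, Finset.sum_sub_distrib, ← Finset.mul_sum,
    Finset.sum_boole, Finset.sum_const, Finset.card_univ]
  simp [wt]

lemma wt_eq_of_dfun_eq {x y : Fin L → Fin 2} (h : dfun L x = dfun L y) : wt x = wt y := by
  rw [dfun_eq, dfun_eq] at h
  have h2 : ((wt x : ℂ)) = wt y := by linear_combination -h / 2
  exact_mod_cast h2

/-- Nodes for Lagrange interpolation. -/
noncomputable def vnode (L : ℕ) (k : Fin (L + 1)) : ℂ := (L : ℂ) - 2 * (k : ℕ)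

lemma vnode_injOn : Set.InjOn (vnode L) ↑(Finset.univ : Finset (Fin (L + 1))) := by
  intro k _ k' _ h
  unfold vnode at h
  have : ((k : ℕ) : ℂ) = ((k' : ℕ) : ℂ) := by linear_combination -h / 2
  have : (k : ℕ) = (k' : ℕ) := by exact_mod_cast this
  exact Fin.ext this

/-- A representative configuration of weight `k`. -/
def rep (L : ℕ) (k : Fin (L + 1)) : Fin L → Fin 2 := fun j => if (j : ℕ) < (k : ℕ) then 1 else 0

lemma wt_rep (k : Fin (L + 1)) : wt (rep L k) = (k : ℕ) := by
  unfold wt rep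
  have hset : (Finset.univ.filter fun j : Fin L =>
      (if (j : ℕ) < (k : ℕ) then (1 : Fin 2) else 0) = 1) =
      Finset.univ.filter fun j : Fin L => (j : ℕ) < (k : ℕ) := by
    ext j
    by_cases h : (j : ℕ) < (k : ℕ) <;> simp [h]
  rw [hset]
  have himg : (Finset.univ.filter fun j : Fin L => (j : ℕ) < (k : ℕ)).image Fin.val =
      Finset.range (k : ℕ) := by
    ext n
    simp only [Finset.mem_image, Finset.mem_filter, Finset.mem_univ, true_and,
      Finset.mem_range]
    constructor
    · rintro ⟨j, hj, rfl⟩; exact hj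
    · intro hn
      exact ⟨⟨n, lt_of_lt_of_le hn (Nat.lt_succ_iff.mp k.isLt)⟩, hn, rfl⟩
  calc (Finset.univ.filter fun j : Fin L => (j : ℕ) < (k : ℕ)).card
      = ((Finset.univ.filter fun j : Fin L => (j : ℕ) < (k : ℕ)).image Fin.val).card :=
        (Finset.card_image_of_injective _ Fin.val_injective).symm
    _ = (k : ℕ) := by rw [himg, Finset.card_range]

lemma dfun_rep (k : Fin (L + 1)) : dfun L (rep L k) = vnode L k := by
  rw [dfun_eq, wt_rep]; rfl

lemma aeval_diagonal {n : Type*} [Fintype n] [DecidableEq n] (d : n → ℂ) (p : Polynomial ℂ) :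
    Polynomial.aeval (Matrix.diagonal d) p = Matrix.diagonal fun i => p.eval (d i) := by
  induction p using Polynomial.induction_on' with
  | add p q hp hq =>
    rw [map_add, hp, hq, Matrix.diagonal_add]
    congr 1
    funext i
    simp
  | monomial n c =>
    rw [Polynomial.aeval_monomial, Matrix.diagonal_pow, Matrix.algebraMap_eq_diagonal,
      Matrix.diagonal_mul_diagonal]
    congr 1
    funext i
    simp [Polynomial.eval_monomial]

end Stmt5Aux

open Stmt5Aux in
/-- For `L ≥ 1`, the set of matrices `X ∈ M_{2^L}(ℂ)` that commute with every unitary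
`U` commuting with `Z_tot` is exactly the linear span of `{Z_tot^n : 0 ≤ n ≤ L}`. -/
theorem stmt5 {L : ℕ} (hL : 1 ≤ L) :
    {X : Matrix (Fin L → Fin 2) (Fin L → Fin 2) ℂ |
        ∀ U : Matrix (Fin L → Fin 2) (Fin L → Fin 2) ℂ,
          U * Uᴴ = 1 → U * Ztot L = Ztot L * U → X * U = U * X}
      = ↑(Submodule.span ℂ ((fun n : ℕ => Ztot L ^ n) '' {n : ℕ | n ≤ L})) := by
  ext X
  simp only [Set.mem_setOf_eq, SetLike.mem_coe]
  constructor
  · -- forward: commutant ⊆ span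
    intro hX
    -- Step 1: X is diagonal
    have hoff : ∀ a b, a ≠ b → X a b = 0 := by
      intro a b hab
      set u : (Fin L → Fin 2) → ℂ := fun z => if z = a then -1 else 1 with hu
      have hXU := hX (Matrix.diagonal u) ?_ ?_
      · have h1 := congrFun (congrFun hXU a) b
        rw [show (X * Matrix.diagonal u) a b = X a b * u b from Matrix.mul_diagonal u X a b,
          show (Matrix.diagonal u * X) a b = u a * X a b from Matrix.diagonal_mul u X a b] at h1
        simp only [hu, if_pos rfl, if_neg (Ne.symm hab)] at h1
        have h2 : (2 : ℂ) * X a b = 0 := by linear_combination h1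
        exact (mul_eq_zero.mp h2).resolve_left two_ne_zero
      · rw [Matrix.diagonal_conjTranspose, Matrix.diagonal_mul_diagonal]
        have : (fun z => u z * (star u) z) = fun _ => (1 : ℂ) := by
          funext z
          by_cases h : z = a <;> simp [hu, h]
        rw [this, Matrix.diagonal_one]
      · rw [Ztot_diag, Matrix.diagonal_mul_diagonal, Matrix.diagonal_mul_diagonal]
        exact congrArg Matrix.diagonal (mul_comm u (dfun L))
    -- Step 2: diagonal entries depend only on dfun
    have hsame : ∀ a b, dfun L a = dfun L b → X a a = X b b := by
      intro a b hd
      by_cases hab : a = b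
      · rw [hab]
      set σ := Equiv.swap a b with hσ
      set U : Matrix (Fin L → Fin 2) (Fin L → Fin 2) ℂ :=
        fun z w => if σ z = w then 1 else 0 with hU
      have hdσ : ∀ z, dfun L (σ z) = dfun L z := by
        intro z
        rcases eq_or_ne z a with rfl | hza
        · rw [hσ, Equiv.swap_apply_left]; exact hd.symm
        rcases eq_or_ne z b with rfl | hzb
        · rw [hσ, Equiv.swap_apply_right]; exact hd
        · rw [hσ, Equiv.swap_apply_of_ne_of_ne hza hzb]
      have hXU := hX U ?_ ?_
      · have h1 := congrFun (congrFun hXU a) b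
        have hl : (X * U) a b = X a a := by
          rw [Matrix.mul_apply]
          have : ∀ t, X a t * U t b = if t = σ.symm b then X a t else 0 := by
            intro t
            simp only [hU]
            by_cases h : σ t = b
            · have ht : t = σ.symm b := by rw [← h, Equiv.symm_apply_apply]
              rw [if_pos h, if_pos ht, mul_one]
            · have ht : t ≠ σ.symm b := fun hc => h (by rw [hc, Equiv.apply_symm_apply])
              rw [if_neg h, if_neg ht, mul_zero]
          rw [Finset.sum_congr rfl fun t _ => this t, Finset.sum_ite_eq' Finset.univ]
          have hsb : σ.symm b = a := by rw [hσ, Equiv.symm_swap, Equiv.swap_apply_right]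
          rw [if_pos (Finset.mem_univ _), hsb]
        have hr : (U * X) a b = X b b := by
          rw [Matrix.mul_apply]
          have : ∀ t, U a t * X t b = if t = σ a then X t b else 0 := by
            intro t
            simp only [hU]
            by_cases h : σ a = t
            · rw [if_pos h, if_pos h.symm, one_mul]
            · rw [if_neg h, if_neg (fun hc => h hc.symm), zero_mul]
          rw [Finset.sum_congr rfl fun t _ => this t, Finset.sum_ite_eq' Finset.univ]
          have hsa : σ a = b := by rw [hσ, Equiv.swap_apply_left]
          rw [if_pos (Finset.mem_univ _), hsa]
        rw [hl, hr] at h1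
        exact h1
      · ext z w
        rw [Matrix.mul_apply, Matrix.one_apply]
        have : ∀ t, U z t * (Uᴴ) t w = if t = σ z then (if σ w = t then 1 else 0) else 0 := by
          intro t
          rw [Matrix.conjTranspose_apply]
          simp only [hU]
          by_cases h : σ z = t
          · rw [if_pos h, if_pos h.symm, one_mul]
            by_cases h2 : σ w = t <;> simp [h2]
          · rw [if_neg h, zero_mul, if_neg (show ¬ t = σ z from fun hc => h hc.symm)]
        rw [Finset.sum_congr rfl fun t _ => this t, Finset.sum_ite_eq' Finset.univ,
          if_pos (Finset.mem_univ _)]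
        by_cases hzw : z = w
        · simp [hzw]
        · rw [if_neg (fun hc : σ w = σ z => hzw (σ.injective hc).symm), if_neg hzw]
      · rw [Ztot_diag]
        ext z w
        rw [Matrix.mul_diagonal, Matrix.diagonal_mul, hU]
        by_cases h : σ z = w
        · simp only [if_pos h]
          rw [← h, hdσ z]
          ring
        · simp [h]
    -- Step 3: Lagrange interpolation
    set f : Fin (L + 1) → ℂ := fun k => X (rep L k) (rep L k) with hf
    set p := Lagrange.interpolate Finset.univ (vnode L) f with hp
    have hdeg : p.natDegree ≤ L := by
      have hlt := Lagrange.degree_interpolate_lt f vnode_injOn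
      rw [Finset.card_univ, Fintype.card_fin] at hlt
      by_cases hp0 : p = 0
      · simp [hp0]
      · have := (Polynomial.natDegree_lt_iff_degree_lt hp0).mpr hlt
        omega
    have hevalX : ∀ x, p.eval (dfun L x) = X x x := by
      intro x
      have hk : wt x < L + 1 := Nat.lt_succ_of_le (wt_le x)
      set k : Fin (L + 1) := ⟨wt x, hk⟩ with hkdef
      have hdx : dfun L x = vnode L k := by rw [dfun_eq]; rfl
      rw [hdx, hp, Lagrange.eval_interpolate_at_node f vnode_injOn (Finset.mem_univ k)]
      exact hsame _ _ (by rw [dfun_rep, ← hdx])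
    have hXdiag : X = Matrix.diagonal fun x => X x x := by
      ext a b
      by_cases h : a = b
      · subst h; simp
      · rw [Matrix.diagonal_apply_ne _ h, hoff a b h]
    have hXP : X = Polynomial.aeval (Ztot L) p := by
      rw [Ztot_diag, aeval_diagonal, hXdiag]
      exact congrArg Matrix.diagonal (funext fun x => (hevalX x).symm)
    rw [hXP, Polynomial.aeval_eq_sum_range]
    refine Submodule.sum_mem _ fun i hi => ?_
    refine Submodule.smul_mem _ _ (Submodule.subset_span ?_)
    exact ⟨i, by
      simp only [Set.mem_setOf_eq]
      exact le_trans (Nat.lt_succ_iff.mp (Finset.mem_range.mp hi)) hdeg, rfl⟩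
  · -- reverse: span ⊆ commutant
    intro hX U hU hcomm
    have hc : Commute U (Ztot L) := hcomm
    induction hX using Submodule.span_induction with
    | mem x hx =>
      obtain ⟨n, _, rfl⟩ := hx
      exact ((hc.pow_right n).symm).eq
    | zero => simp
    | add x y _ _ hx hy => rw [add_mul, mul_add, hx, hy]
    | smul a x _ hx => rw [smul_mul_assoc, mul_smul_comm, hx]
end

section
/- Let L ≥ 1 and work in M_{2^L}(ℂ) ≅ M_2(ℂ)^{⊗L}. For each j let Z_j denote the Pauli matrix Z = diag(1, −1) acting on the j-th tensor factor, and set Z_tot = Σ_{j=1}^L Z_j. Then the linear span over all (a, b) ∈ ℂ² of the product matrices ∏_{j=1}^L (a·I + b·Z_j) equals the linear span of {Z_tot^m : 0 ≤ m ≤ L}. -/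
open Matrix

namespace Stmt6Aux

/-- The diagonal entry function of `Zsite`. -/
noncomputable def zval {L : ℕ} (j : Fin L) (x : Fin L → Fin 2) : ℂ :=
  if x j = 0 then 1 else -1

lemma pauli_diag (u : Fin 2) : PauliZ u u = if u = 0 then 1 else -1 := by
  fin_cases u <;> simp [PauliZ]

lemma pauli_offdiag {u v : Fin 2} (h : u ≠ v) : PauliZ u v = 0 := by
  fin_cases u <;> fin_cases v <;> simp_all [PauliZ]

lemma Zsite_eq (L : ℕ) (j : Fin L) :
    Zsite L j = Matrix.diagonal (zval j) := by
  ext x y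
  by_cases h : x = y
  · subst h
    simp [Zsite, Matrix.diagonal, pauli_diag, zval]
  · rw [Matrix.diagonal_apply_ne _ h]
    obtain ⟨l, hl⟩ := Function.ne_iff.mp h
    by_cases hlj : l = j
    · subst hlj
      simp [Zsite, pauli_offdiag hl]
    · unfold Zsite
      rw [Finset.prod_eq_zero (Finset.mem_erase.mpr ⟨hlj, Finset.mem_univ l⟩)
        (by simp [hl]), mul_zero]

/-- The number of `1`s in the configuration `x`. -/
def wt {L : ℕ} (x : Fin L → Fin 2) : ℕ :=
  (Finset.univ.filter fun j => x j = 1).card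

lemma wt_le {L : ℕ} (x : Fin L → Fin 2) : wt x ≤ L := by
  classical
  calc wt x ≤ Finset.univ.card := Finset.card_filter_le _ _
  _ = L := by simp

/-- The weight as an element of `Fin (L+1)`. -/
def kfin {L : ℕ} (x : Fin L → Fin 2) : Fin (L + 1) :=
  ⟨wt x, Nat.lt_succ_of_le (wt_le x)⟩

/-- The linear map sending `c : Fin (L+1) → ℂ` to the diagonal matrix whose entry
at `x` is `c (kfin x)`. -/
noncomputable def T (L : ℕ) : (Fin (L + 1) → ℂ) →ₗ[ℂ]
    Matrix (Fin L → Fin 2) (Fin L → Fin 2) ℂ where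
  toFun c := Matrix.diagonal (fun x => c (kfin x))
  map_add' c c' := by
    show Matrix.diagonal _ = Matrix.diagonal _ + Matrix.diagonal _
    rw [show (fun x => (c + c') (kfin x))
        = fun x : Fin L → Fin 2 => c (kfin x) + c' (kfin x) from rfl,
      ← Matrix.diagonal_add]
  map_smul' r c := by
    show Matrix.diagonal _ = r • Matrix.diagonal _
    rw [show (fun x => (r • c) (kfin x))
        = r • fun x : Fin L → Fin 2 => c (kfin x) from rfl,
      Matrix.diagonal_smul]

lemma card_filter_not {L : ℕ} (x : Fin L → Fin 2) :
    (Finset.univ.filter fun j => ¬ x j = 1).card = L - wt x := by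
  classical
  have h := Finset.card_filter_add_card_filter_not (s := Finset.univ)
    (p := fun j : Fin L => x j = 1)
  simp only [Finset.card_univ, Fintype.card_fin] at h
  rw [show (Finset.filter (fun a => ¬(fun j : Fin L => x j = 1) a) Finset.univ)
      = Finset.filter (fun j => ¬ x j = 1) Finset.univ from rfl,
    show (Finset.filter (fun j : Fin L => x j = 1) Finset.univ).card = wt x from rfl] at h
  omega

lemma fin2_cases (u : Fin 2) : u = 0 ∨ u = 1 := by omega

lemma zval_prod {L : ℕ} (a b : ℂ) (x : Fin L → Fin 2) :
    ∏ j, (a + b * zval j x) = (a + b) ^ (L - wt x) * (a - b) ^ wt x := by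
  classical
  rw [← Finset.prod_filter_mul_prod_filter_not Finset.univ (fun j => x j = 1)]
  have h1 : ∀ j ∈ Finset.univ.filter fun j => x j = 1,
      (a + b * zval j x) = a - b := by
    intro j hj
    rw [Finset.mem_filter] at hj
    have : ¬ (x j = 0) := by rw [hj.2]; decide
    simp [zval, this]; ring
  have h2 : ∀ j ∈ Finset.univ.filter fun j => ¬ x j = 1,
      (a + b * zval j x) = a + b := by
    intro j hj
    rw [Finset.mem_filter] at hj
    have : x j = 0 := by rcases fin2_cases (x j) with h | h; exact h; exact absurd h hj.2
    simp [zval, this]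
  rw [Finset.prod_congr rfl h1, Finset.prod_congr rfl h2, Finset.prod_const,
    Finset.prod_const, card_filter_not]
  unfold wt
  ring

lemma zval_sum {L : ℕ} (x : Fin L → Fin 2) :
    ∑ j, zval j x = (L : ℂ) - 2 * wt x := by
  classical
  rw [← Finset.sum_filter_add_sum_filter_not Finset.univ (fun j => x j = 1)]
  have h1 : ∀ j ∈ Finset.univ.filter fun j => x j = 1, zval j x = -1 := by
    intro j hj
    rw [Finset.mem_filter] at hj
    have : ¬ (x j = 0) := by rw [hj.2]; decide
    simp [zval, this]
  have h2 : ∀ j ∈ Finset.univ.filter fun j => ¬ x j = 1, zval j x = 1 := by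
    intro j hj
    rw [Finset.mem_filter] at hj
    have : x j = 0 := by rcases fin2_cases (x j) with h | h; exact h; exact absurd h hj.2
    simp [zval, this]
  have hw := wt_le x
  rw [Finset.sum_congr rfl h1, Finset.sum_congr rfl h2, Finset.sum_const,
    Finset.sum_const, card_filter_not,
    show (Finset.univ.filter fun j : Fin L => x j = 1).card = wt x from rfl,
    nsmul_eq_mul, nsmul_eq_mul, Nat.cast_sub hw]
  ring

lemma Ztot_eq (L : ℕ) :
    Ztot L = Matrix.diagonal (fun x => (L : ℂ) - 2 * wt x) := by
  unfold Ztot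
  ext x y
  by_cases h : x = y
  · subst h
    simp only [Matrix.sum_apply, Zsite_eq, Matrix.diagonal_apply_eq]
    exact zval_sum x
  · simp only [Matrix.sum_apply, Zsite_eq, Matrix.diagonal_apply_ne _ h,
      Finset.sum_const_zero]

lemma Ztot_pow (L m : ℕ) :
    Ztot L ^ m = Matrix.diagonal (fun x => ((L : ℂ) - 2 * wt x) ^ m) := by
  rw [Ztot_eq, Matrix.diagonal_pow]
  rfl

lemma list_prod_diagonal {ι n : Type*} [Fintype n] [DecidableEq n] (l : List ι)
    (f : ι → n → ℂ) :
    (l.map (fun j => Matrix.diagonal (f j))).prod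
      = Matrix.diagonal (fun x => (l.map (fun j => f j x)).prod) := by
  induction l with
  | nil => simp [Matrix.diagonal_one]
  | cons hd tl ih =>
      simp only [List.map_cons, List.prod_cons, ih, Matrix.diagonal_mul_diagonal]

lemma prod_eq (L : ℕ) (a b : ℂ) :
    ((List.finRange L).map (fun j =>
        a • (1 : Matrix (Fin L → Fin 2) (Fin L → Fin 2) ℂ) + b • Zsite L j)).prod
      = Matrix.diagonal (fun x => (a + b) ^ (L - wt x) * (a - b) ^ wt x) := by
  have hfac : ∀ j : Fin L,
      a • (1 : Matrix (Fin L → Fin 2) (Fin L → Fin 2) ℂ) + b • Zsite L j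
        = Matrix.diagonal (fun x => a + b * zval j x) := by
    intro j
    rw [Zsite_eq]
    ext x y
    by_cases h : x = y
    · subst h
      simp [Matrix.add_apply, Matrix.smul_apply, Matrix.diagonal_apply_eq,
        Matrix.one_apply_eq, smul_eq_mul]
    · simp [Matrix.add_apply, Matrix.smul_apply, Matrix.diagonal_apply_ne _ h,
        Matrix.one_apply_ne h]
  simp only [hfac]
  rw [list_prod_diagonal]
  refine congrArg Matrix.diagonal (funext fun x => ?_)
  rw [← Fin.prod_univ_def]
  exact zval_prod a b x

lemma vandermonde_span_rows {n : ℕ} (c : Fin (n + 1) → ℂ) (hc : Function.Injective c) :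
    Submodule.span ℂ
      (Set.range (fun m : Fin (n + 1) => fun i : Fin (n + 1) => c m ^ (i : ℕ))) = ⊤ := by
  have hdet : IsUnit (Matrix.vandermonde c).det := by
    rw [isUnit_iff_ne_zero, Matrix.det_vandermonde_ne_zero_iff]
    exact hc
  have hli : LinearIndependent ℂ (fun m => Matrix.vandermonde c m) :=
    Matrix.linearIndependent_rows_iff_isUnit.mpr
      ((Matrix.isUnit_iff_isUnit_det _).mpr hdet)
  have heq : (fun m : Fin (n + 1) => fun i : Fin (n + 1) => c m ^ (i : ℕ))
      = fun m => Matrix.vandermonde c m := by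
    funext m i
    simp [Matrix.vandermonde]
  rw [heq]
  exact hli.span_eq_top_of_card_eq_finrank (by simp)

lemma vandermonde_span {n : ℕ} (c : Fin (n + 1) → ℂ) (hc : Function.Injective c) :
    Submodule.span ℂ (Set.range (fun m : Fin (n + 1) => fun i => c i ^ (m : ℕ))) = ⊤ := by
  have hdet : IsUnit (Matrix.vandermonde c).det := by
    rw [isUnit_iff_ne_zero, Matrix.det_vandermonde_ne_zero_iff]
    exact hc
  have hli : LinearIndependent ℂ (fun m => (Matrix.vandermonde c)ᵀ m) :=
    Matrix.linearIndependent_cols_iff_isUnit.mpr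
      ((Matrix.isUnit_iff_isUnit_det _).mpr hdet)
  have heq : (fun m : Fin (n + 1) => fun i => c i ^ (m : ℕ))
      = fun m => (Matrix.vandermonde c)ᵀ m := by
    funext m i
    simp [Matrix.vandermonde, Matrix.transpose_apply]
  rw [heq]
  exact hli.span_eq_top_of_card_eq_finrank (by simp)

end Stmt6Aux

open Stmt6Aux in
/-- For `L ≥ 1`, the span over all `(a, b) ∈ ℂ²` of the products `∏_{j=1}^L (a·I + b·Z_j)`
(the matrices `Z_j` commute pairwise, so the ordered product over `j = 1, …, L` is
unambiguous) equals the span of `{Z_tot^m : 0 ≤ m ≤ L}`. -/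
theorem stmt6 {L : ℕ} (hL : 1 ≤ L) :
    Submodule.span ℂ {M : Matrix (Fin L → Fin 2) (Fin L → Fin 2) ℂ |
        ∃ a b : ℂ, M = ((List.finRange L).map (fun j =>
          a • (1 : Matrix (Fin L → Fin 2) (Fin L → Fin 2) ℂ) + b • Zsite L j)).prod}
      = Submodule.span ℂ ((fun m : ℕ => Ztot L ^ m) '' {m : ℕ | m ≤ L}) := by
  classical
  -- the two index-function sets in `Fin (L+1) → ℂ`
  set setA : Set (Fin (L + 1) → ℂ) :=
    {v | ∃ a b : ℂ, v = fun i : Fin (L + 1) => (a + b) ^ (Nat.sub L (i : ℕ)) * (a - b) ^ (i : ℕ)}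
    with hsetA
  set setB : Set (Fin (L + 1) → ℂ) :=
    (fun m : ℕ => fun i : Fin (L + 1) => ((L : ℂ) - 2 * (i : ℕ)) ^ m) '' {m : ℕ | m ≤ L}
    with hsetB
  -- the LHS generating set is the image of setA under T
  have hA : {M : Matrix (Fin L → Fin 2) (Fin L → Fin 2) ℂ |
        ∃ a b : ℂ, M = ((List.finRange L).map (fun j =>
          a • (1 : Matrix (Fin L → Fin 2) (Fin L → Fin 2) ℂ) + b • Zsite L j)).prod}
      = T L '' setA := by
    ext M
    constructor
    · rintro ⟨a, b, rfl⟩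
      exact ⟨_, ⟨a, b, rfl⟩, by
        rw [prod_eq L a b]
        rfl⟩
    · rintro ⟨v, ⟨a, b, rfl⟩, rfl⟩
      exact ⟨a, b, by rw [prod_eq L a b]; rfl⟩
  have hB : ((fun m : ℕ => Ztot L ^ m) '' {m : ℕ | m ≤ L}) = T L '' setB := by
    rw [hsetB, ← Set.image_comp]
    apply Set.image_congr
    intro m _
    show Ztot L ^ m = T L _
    rw [Ztot_pow L m]
    rfl
  rw [hA, hB, Submodule.span_image, Submodule.span_image]
  -- suffices: both vector spans are ⊤
  have hTA : Submodule.span ℂ setA = ⊤ := by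
    rw [eq_top_iff]
    have hc : Function.Injective (fun i : Fin (L + 1) => ((i : ℕ) : ℂ)) := by
      intro i j h
      have : (i : ℕ) = (j : ℕ) := Nat.cast_injective h
      exact Fin.ext this
    rw [← vandermonde_span_rows _ hc]
    apply Submodule.span_mono
    rintro v ⟨m, rfl⟩
    refine ⟨(1 + ((m : ℕ) : ℂ)) / 2, (1 - ((m : ℕ) : ℂ)) / 2, ?_⟩
    funext i
    have h1 : (1 + ((m : ℕ) : ℂ)) / 2 + (1 - ((m : ℕ) : ℂ)) / 2 = 1 := by ring
    have h2 : (1 + ((m : ℕ) : ℂ)) / 2 - (1 - ((m : ℕ) : ℂ)) / 2 = ((m : ℕ) : ℂ) := by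
      ring
    rw [h1, h2, one_pow, one_mul]
  have hTB : Submodule.span ℂ setB = ⊤ := by
    rw [eq_top_iff]
    have hd : Function.Injective (fun i : Fin (L + 1) => (L : ℂ) - 2 * ((i : ℕ) : ℂ)) := by
      intro i j h
      have h2 : ((i : ℕ) : ℂ) = ((j : ℕ) : ℂ) := by
        simp only at h
        linear_combination (-1/2 : ℂ) * h
      exact Fin.ext (Nat.cast_injective h2)
    rw [← vandermonde_span _ hd]
    apply Submodule.span_mono
    rintro v ⟨m, rfl⟩
    exact ⟨(m : ℕ), Nat.lt_succ_iff.mp m.isLt, rfl⟩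
  rw [hTA, hTB]
end

section
/- Let A be a unital associative ℂ-algebra and let γ : {1,2} × {1,…,2k} → A be a Majorana family, i.e. γ_{i,a} γ_{j,b} + γ_{j,b} γ_{i,a} = 2 δ_{ij} δ_{ab} · 1 for all i, j ∈ {1,2} and a, b ∈ {1,…,2k}. Define L = i · Σ_{a=1}^{2k} γ_{1,a} γ_{2,a} and J_m^{ab} = −(i/2) γ_{m,a} γ_{m,b} for m ∈ {1,2} and a ≠ b. Then L² = 2k · 1 − 8 · Σ_{1 ≤ a < b ≤ 2k} J_1^{ab} J_2^{ab}. -/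
/-- Let `A` be a unital associative ℂ-algebra and `γ : Fin 2 × Fin (2k) → A` a Majorana
family: `γ_{i,a} γ_{j,b} + γ_{j,b} γ_{i,a} = 2 δ_{ij} δ_{ab} · 1`.  With
`L = i Σ_a γ_{1,a} γ_{2,a}` and `J_m^{ab} = −(i/2) γ_{m,a} γ_{m,b}` (for `a ≠ b`):
`L² = 2k · 1 − 8 Σ_{a<b} J_1^{ab} J_2^{ab}`. -/
theorem stmt7 {A : Type*} [Ring A] [Algebra ℂ A] {k : ℕ} (hk : 1 ≤ k)
    (γ : Fin 2 → Fin (2 * k) → A)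
    (hγ : ∀ (i j : Fin 2) (a b : Fin (2 * k)),
      γ i a * γ j b + γ j b * γ i a = if i = j ∧ a = b then 2 else 0) :
    (Complex.I • (∑ a, γ 0 a * γ 1 a)) ^ 2
      = (2 * (k : ℂ)) • (1 : A)
        - (8 : ℂ) • ∑ a : Fin (2 * k), ∑ b : Fin (2 * k),
            (if a < b then
              ((-(Complex.I / 2)) • (γ 0 a * γ 0 b)) * ((-(Complex.I / 2)) • (γ 1 a * γ 1 b))
            else 0) := by
  have hac : ∀ (i j : Fin 2) (a b : Fin (2 * k)), ¬ (i = j ∧ a = b) →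
      γ i a * γ j b = -(γ j b * γ i a) := by
    intro i j a b h
    have h' := hγ i j a b
    rw [if_neg h] at h'
    exact eq_neg_of_add_eq_zero_left h'
  have hsq : ∀ (i : Fin 2) (a : Fin (2 * k)), γ i a * γ i a = 1 := by
    intro i a
    have h' := hγ i i a a
    rw [if_pos ⟨rfl, rfl⟩] at h'
    have h2 : (2 : ℂ) • (γ i a * γ i a) = (2 : ℂ) • (1 : A) := by
      rw [two_smul, two_smul, h']
      norm_num
    have h3 := congrArg (fun x => ((2 : ℂ))⁻¹ • x) h2
    simpa [smul_smul] using h3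
  set f : Fin (2 * k) → Fin (2 * k) → A := fun a b => γ 0 a * γ 0 b * (γ 1 a * γ 1 b)
    with hf
  have hpt : ∀ a b, (γ 0 a * γ 1 a) * (γ 0 b * γ 1 b)
      = if a = b then -(1 : A) else -(f a b) := by
    intro a b
    by_cases hab : a = b
    · subst hab
      rw [if_pos rfl]
      have h1 : γ 1 a * γ 0 a = -(γ 0 a * γ 1 a) := hac 1 0 a a (by simp)
      rw [mul_assoc, ← mul_assoc (γ 1 a), h1]
      simp [mul_assoc, hsq]
    · rw [if_neg hab]
      have h2 : γ 1 a * γ 0 b = -(γ 0 b * γ 1 a) := hac 1 0 a b (by simp)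
      rw [mul_assoc, ← mul_assoc (γ 1 a), h2, hf]
      simp [mul_assoc]
  have fsymm : ∀ a b : Fin (2 * k), a ≠ b → f a b = f b a := by
    intro a b hab
    have h0 : γ 0 b * γ 0 a = -(γ 0 a * γ 0 b) :=
      hac 0 0 b a (fun h => (Ne.symm hab) h.2)
    have h1 : γ 1 b * γ 1 a = -(γ 1 a * γ 1 b) :=
      hac 1 1 b a (fun h => (Ne.symm hab) h.2)
    rw [hf]
    simp only [h0, h1, neg_mul, mul_neg, neg_neg]
  -- rewrite RHS summand
  have hterm : ∀ a b : Fin (2 * k),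
      (if a < b then
        ((-(Complex.I / 2)) • (γ 0 a * γ 0 b)) * ((-(Complex.I / 2)) • (γ 1 a * γ 1 b))
      else 0) = if a < b then (-(1/4) : ℂ) • f a b else 0 := by
    intro a b
    by_cases h : a < b
    · rw [if_pos h, if_pos h, smul_mul_smul_comm, hf]
      congr 1
      linear_combination (1/4 : ℂ) * Complex.I_sq
    · rw [if_neg h, if_neg h]
  -- LHS
  rw [sq, smul_mul_smul_comm, Complex.I_mul_I, Finset.sum_mul_sum]
  simp only [hpt]
  rw [Finset.sum_congr rfl (fun a _ => Finset.sum_congr rfl (fun b _ => hterm a b))]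
  -- Now push scalars
  have split : ∀ a b : Fin (2 * k), (if a = b then -(1 : A) else -(f a b))
      = -((if a = b then (1 : A) else 0) + (if a < b then f a b else 0)
          + (if b < a then f a b else 0)) := by
    intro a b
    rcases lt_trichotomy a b with h | h | h
    · simp [h, h.ne, not_lt_of_gt h]
    · simp [h, lt_irrefl]
    · simp [h, h.ne', not_lt_of_gt h]
  simp only [split]
  rw [show ∀ s : A, (-1 : ℂ) • s = -s from fun s => by simp]
  simp only [Finset.sum_neg_distrib, neg_neg, Finset.sum_add_distrib]
  have hdiag : ∑ a : Fin (2 * k), ∑ b : Fin (2 * k), (if a = b then (1 : A) else 0)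
      = (2 * (k : ℂ)) • (1 : A) := by
    simp [Finset.sum_ite_eq, Finset.card_univ, Algebra.smul_def, map_ofNat]
  have hswap : ∑ a : Fin (2 * k), ∑ b : Fin (2 * k), (if b < a then f a b else 0)
      = ∑ a : Fin (2 * k), ∑ b : Fin (2 * k), (if a < b then f a b else 0) := by
    rw [Finset.sum_comm]
    refine Finset.sum_congr rfl fun a _ => Finset.sum_congr rfl fun b _ => ?_
    by_cases h : a < b
    · rw [if_pos h, if_pos h, fsymm b a h.ne']
    · rw [if_neg h, if_neg h]
  rw [hdiag, hswap]
  have hsmul : ∑ a : Fin (2 * k), ∑ b : Fin (2 * k),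
      (if a < b then (-(1/4) : ℂ) • f a b else 0)
      = (-(1/4) : ℂ) • ∑ a : Fin (2 * k), ∑ b : Fin (2 * k),
          (if a < b then f a b else 0) := by
    rw [Finset.smul_sum]
    refine Finset.sum_congr rfl fun a _ => ?_
    rw [Finset.smul_sum]
    refine Finset.sum_congr rfl fun b _ => ?_
    by_cases h : a < b <;> simp [h]
  rw [hsmul, smul_smul]
  norm_num
  rw [two_smul, ← add_assoc]
end

section
/- Let A be a unital associative ℂ-algebra, let k, L ≥ 1, and let γ̃ : {1,…,2k} × {1,…,2L} → A (with γ̃_i^a denoting the element with replica index a and mode index i) satisfy: for each fixed a, γ̃_i^a γ̃_j^a + γ̃_j^a γ̃_i^a = 2 δ_{ij} · 1 for all i, j; and for a ≠ b, γ̃_i^a γ̃_j^b = γ̃_j^b γ̃_i^a for all i, j. Define the Klein factors Γ̃^b = (−i)^L · γ̃_1^b γ̃_2^b ⋯ γ̃_{2L}^b and the dressed modes γ̄_i^a = (∏_{b=1}^{a−1} Γ̃^b) · γ̃_i^a (product in increasing order of b). Then the dressed modes form a Majorana family: γ̄_i^a γ̄_j^b + γ̄_j^b γ̄_i^a = 2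 δ_{ab} δ_{ij} · 1 for all a, b ∈ {1,…,2k} and i, j ∈ {1,…,2L}. -/
set_option linter.unusedSectionVars false
set_option linter.unusedVariables false


/-- The Klein factor `Γ̃^b = (−i)^L · γ̃_1^b γ̃_2^b ⋯ γ̃_{2L}^b`: the ordered product of
all `2L` modes of replica `b`, with prefactor `(−i)^L`. -/
noncomputable def kleinFactor {A : Type*} [Ring A] [Algebra ℂ A] {k L : ℕ}
    (γ : Fin (2 * k) → Fin (2 * L) → A) (b : Fin (2 * k)) : A :=
  ((-Complex.I) ^ L) • ((List.finRange (2 * L)).map (γ b)).prod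

/-- The dressed mode `γ̄_i^a = (∏_{b=1}^{a−1} Γ̃^b) · γ̃_i^a`, the product over `b < a`
being taken in increasing order of `b`. -/
noncomputable def dressedMode {A : Type*} [Ring A] [Algebra ℂ A] {k L : ℕ}
    (γ : Fin (2 * k) → Fin (2 * L) → A) (a : Fin (2 * k)) (i : Fin (2 * L)) : A :=
  (((List.finRange (2 * k)).filter (fun b => decide (b < a))).map (kleinFactor γ)).prod
    * γ a i

section Aux
variable {A : Type*} [Ring A] [Algebra ℂ A] {k L : ℕ}
variable {γ : Fin (2 * k) → Fin (2 * L) → A}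
variable (hsame : ∀ (a : Fin (2 * k)) (i j : Fin (2 * L)),
      γ a i * γ a j + γ a j * γ a i = if i = j then 2 else 0)
variable (hdiff : ∀ (a b : Fin (2 * k)), a ≠ b → ∀ (i j : Fin (2 * L)),
      γ a i * γ b j = γ b j * γ a i)

/-- The bare product of all modes within one replica. -/
noncomputable def bareProd (γ : Fin (2 * k) → Fin (2 * L) → A) (b : Fin (2 * k)) : A :=
  ((List.finRange (2 * L)).map (γ b)).prod

include hsame in
lemma gamma_sq_eq_one (a : Fin (2 * k)) (i : Fin (2 * L)) : γ a i * γ a i = 1 := by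
  have h := hsame a i i
  rw [if_pos rfl] at h
  have h2 : (2 : ℂ) • (γ a i * γ a i) = (2 : ℂ) • (1 : A) := by
    rw [two_smul, two_smul, h]
    norm_num
  have h3 := congrArg (fun y => (2 : ℂ)⁻¹ • y) h2
  simpa [smul_smul] using h3

include hsame in
lemma anti (a : Fin (2 * k)) {i j : Fin (2 * L)} (hij : i ≠ j) :
    γ a i * γ a j = -(γ a j * γ a i) := by
  have h := hsame a i j
  rw [if_neg hij] at h
  exact eq_neg_of_add_eq_zero_left h

include hsame in
lemma move1 (a : Fin (2 * k)) (i : Fin (2 * L)) (l : List (Fin (2 * L))) :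
    γ a i * (l.map (γ a)).prod
      = (-1 : A) ^ (l.countP (fun j => decide (j ≠ i))) * ((l.map (γ a)).prod * γ a i) := by
  induction l with
  | nil => simp
  | cons x t ih =>
    rw [List.map_cons, List.prod_cons, List.countP_cons]
    set T := (t.map (γ a)).prod with hT
    set n := t.countP (fun j => decide (j ≠ i)) with hn
    have hinv : (-1 : A) ^ n * (-1 : A) ^ n = 1 := by
      rw [← pow_add]
      exact Even.neg_one_pow ⟨n, rfl⟩
    by_cases hx : x = i
    · subst hx
      have hcnt : n + (if (fun j => decide (j ≠ x)) x = true then 1 else 0) = n := by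
        simp [hn]
      rw [hcnt, ← mul_assoc, gamma_sq_eq_one hsame, one_mul]
      calc T = 1 * T := (one_mul T).symm
        _ = ((-1 : A) ^ n * (-1 : A) ^ n) * T := by rw [hinv]
        _ = (-1 : A) ^ n * ((-1 : A) ^ n * (T * γ a x) * γ a x) := by
            rw [mul_assoc, mul_assoc, mul_assoc, gamma_sq_eq_one hsame, mul_one]
        _ = (-1 : A) ^ n * (γ a x * T * γ a x) := by rw [← ih]
    · have hcnt : n + (if (fun j => decide (j ≠ i)) x = true then 1 else 0) = n + 1 := by
        simp [hn, hx]
      rw [hcnt]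
      have hxmem : γ a i * γ a x = -(γ a x * γ a i) := anti hsame a (fun h => hx h.symm)
      calc γ a i * (γ a x * T) = (γ a i * γ a x) * T := by rw [mul_assoc]
        _ = -(γ a x * γ a i) * T := by rw [hxmem]
        _ = -(γ a x * (γ a i * T)) := by rw [neg_mul, mul_assoc]
        _ = -(γ a x * ((-1 : A) ^ n * (T * γ a i))) := by rw [ih]
        _ = (-1 : A) ^ (n + 1) * (γ a x * T * γ a i) := by
            rw [pow_succ, mul_neg_one, neg_mul, neg_inj, mul_assoc]
            exact ((Commute.neg_one_right (γ a x)).pow_right n).left_comm _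

include hsame in
lemma prodsq (a : Fin (2 * k)) (l : List (Fin (2 * L))) (hnd : l.Nodup) :
    (l.map (γ a)).prod * (l.map (γ a)).prod = (-1 : A) ^ (l.length.choose 2) := by
  induction l with
  | nil => simp
  | cons x t ih =>
    rw [List.map_cons, List.prod_cons]
    have hx : x ∉ t := (List.nodup_cons.1 hnd).1
    have ht : t.Nodup := (List.nodup_cons.1 hnd).2
    set T := (t.map (γ a)).prod with hTdef
    set m := t.length with hmdef
    have hcnt : t.countP (fun j => decide (j ≠ x)) = m := by
      rw [hmdef]
      apply List.countP_eq_length.2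
      intro j hj
      simp only [ne_eq, decide_eq_true_eq]
      exact fun h => hx (h ▸ hj)
    have hmv : γ a x * T = (-1 : A) ^ m * (T * γ a x) := by
      have h := move1 hsame a x t; rw [hcnt] at h; exact h
    have h2 : (-1 : A) ^ m * (-1 : A) ^ m = 1 := by
      rw [← pow_add]; exact Even.neg_one_pow ⟨m, rfl⟩
    have hTx : T * γ a x = (-1 : A) ^ m * (γ a x * T) := by
      rw [hmv, ← mul_assoc, h2, one_mul]
    have hlen : (x :: t).length = m + 1 := by simp [hmdef]
    rw [hlen]
    calc γ a x * T * (γ a x * T) = γ a x * (T * γ a x) * T := by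
          rw [mul_assoc, mul_assoc, mul_assoc]
      _ = γ a x * ((-1 : A) ^ m * (γ a x * T)) * T := by rw [hTx]
      _ = (-1 : A) ^ m * (γ a x * (γ a x * T) * T) := by
          rw [((Commute.neg_one_right (γ a x)).pow_right m).left_comm, mul_assoc]
      _ = (-1 : A) ^ m * (T * T) := by rw [← mul_assoc (γ a x), gamma_sq_eq_one hsame, one_mul]
      _ = (-1 : A) ^ m * (-1 : A) ^ (m.choose 2) := by rw [ih ht]
      _ = (-1 : A) ^ ((m + 1).choose 2) := by
          rw [← pow_add]
          congr 1
          rw [Nat.choose_succ_succ, Nat.choose_one_right]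

include hsame in
lemma klein_sq (b : Fin (2 * k)) : kleinFactor γ b * kleinFactor γ b = 1 := by
  unfold kleinFactor
  rw [smul_mul_smul_comm, prodsq hsame b _ (List.nodup_finRange _), List.length_finRange]
  have hc : (-Complex.I) ^ L * (-Complex.I) ^ L = (-1 : ℂ) ^ L := by
    rw [← mul_pow, neg_mul_neg, Complex.I_mul_I]
  rw [hc]
  set N := (2 * L).choose 2 with hNdef
  have hch : N = L * (2 * L - 1) := by
    rw [hNdef, Nat.choose_two_right, mul_assoc, Nat.mul_div_cancel_left _ (by norm_num)]
  have hEven : Even (L + N) := by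
    rw [hch]
    cases L with
    | zero => simp
    | succ n =>
        have h1 : 2 * (n + 1) - 1 = 2 * n + 1 := by omega
        rw [h1]
        exact ⟨(n + 1) * (n + 1), by ring⟩
  calc ((-1 : ℂ) ^ L) • ((-1 : A) ^ N)
      = ((-1 : ℂ) ^ L) • (((algebraMap ℂ A) (-1 : ℂ)) ^ N) := by norm_num
    _ = ((-1 : ℂ) ^ L) • ((algebraMap ℂ A) ((-1 : ℂ) ^ N)) := by rw [map_pow]
    _ = (algebraMap ℂ A) ((-1 : ℂ) ^ L * (-1 : ℂ) ^ N) := by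
        rw [Algebra.smul_def, map_mul]
    _ = (algebraMap ℂ A) ((-1 : ℂ) ^ (L + N)) := by rw [pow_add]
    _ = 1 := by rw [hEven.neg_one_pow, map_one]

include hdiff in
lemma comm_gamma_klein {a b : Fin (2 * k)} (hab : a ≠ b) (i : Fin (2 * L)) :
    Commute (γ a i) (kleinFactor γ b) := by
  apply Commute.smul_right
  apply Commute.list_prod_right
  intro x hx
  obtain ⟨j, -, rfl⟩ := List.mem_map.1 hx
  exact hdiff a b hab i j

include hdiff in
lemma comm_klein_klein (b c : Fin (2 * k)) :
    Commute (kleinFactor γ b) (kleinFactor γ c) := by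
  rcases eq_or_ne b c with rfl | hbc
  · exact Commute.refl _
  · unfold kleinFactor
    apply Commute.smul_left
    apply Commute.smul_right
    apply Commute.list_prod_right
    intro x hx
    obtain ⟨j, -, rfl⟩ := List.mem_map.1 hx
    apply Commute.list_prod_left
    intro y hy
    obtain ⟨i, -, rfl⟩ := List.mem_map.1 hy
    exact hdiff b c hbc i j

include hsame in
lemma gamma_klein_self (hL : 1 ≤ L) (a : Fin (2 * k)) (i : Fin (2 * L)) :
    γ a i * kleinFactor γ a = -(kleinFactor γ a * γ a i) := by
  have hcore : γ a i * ((List.finRange (2 * L)).map (γ a)).prod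
      = -(((List.finRange (2 * L)).map (γ a)).prod * γ a i) := by
    have h := move1 hsame a i (List.finRange (2 * L))
    have hc1 : (List.finRange (2 * L)).countP (fun j => decide (j = i))
        = (List.finRange (2 * L)).count i := by
      simp [List.count, Function.comp]
      congr 1
    have hc2 : (List.finRange (2 * L)).count i = 1 :=
      List.count_eq_one_of_mem (List.nodup_finRange _) (List.mem_finRange i)
    have hlen := List.length_eq_countP_add_countP (fun j => decide (j = i))
        (l := List.finRange (2 * L))
    have hfun : (fun a => decide ¬((fun j => decide (j = i)) a = true))
        = (fun j => decide (j ≠ i)) := by funext j; simp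
    rw [hfun, List.length_finRange, hc1, hc2] at hlen
    have hcnt : (List.finRange (2 * L)).countP (fun j => decide (j ≠ i)) = 2 * L - 1 := by
      omega
    rw [hcnt, Odd.neg_one_pow ⟨L - 1, by omega⟩, neg_one_mul] at h
    exact h
  unfold kleinFactor
  rw [mul_smul_comm, smul_mul_assoc, hcore, smul_neg]

include hsame hdiff in
lemma move2 (hL : 1 ≤ L) (a : Fin (2 * k)) (i : Fin (2 * L)) (l : List (Fin (2 * k))) :
    γ a i * (l.map (kleinFactor γ)).prod
      = (-1 : A) ^ (l.count a) * ((l.map (kleinFactor γ)).prod * γ a i) := by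
  induction l with
  | nil => simp
  | cons x t ih =>
    rw [List.map_cons, List.prod_cons, List.count_cons]
    set T := (t.map (kleinFactor γ)).prod with hTdef
    set n := t.count a with hndef
    rcases eq_or_ne x a with rfl | hx
    · have hcnt : (n + if x == x then 1 else 0) = n + 1 := by simp
      rw [hcnt]
      calc γ x i * (kleinFactor γ x * T)
          = (γ x i * kleinFactor γ x) * T := by rw [mul_assoc]
        _ = -(kleinFactor γ x * γ x i) * T := by rw [gamma_klein_self hsame hL]
        _ = -(kleinFactor γ x * (γ x i * T)) := by rw [neg_mul, mul_assoc]
        _ = -(kleinFactor γ x * ((-1 : A) ^ n * (T * γ x i))) := by rw [ih]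
        _ = (-1 : A) ^ (n + 1) * (kleinFactor γ x * T * γ x i) := by
            rw [pow_succ, mul_neg_one, neg_mul, neg_inj, mul_assoc]
            exact ((Commute.neg_one_right (kleinFactor γ x)).pow_right n).left_comm _
    · have hcnt : (n + if x == a then 1 else 0) = n := by simp [hx]
      rw [hcnt]
      have hcom : Commute (γ a i) (kleinFactor γ x) :=
        comm_gamma_klein hdiff (fun h => hx h.symm) i
      calc γ a i * (kleinFactor γ x * T)
          = kleinFactor γ x * (γ a i * T) := hcom.left_comm T
        _ = kleinFactor γ x * ((-1 : A) ^ n * (T * γ a i)) := by rw [ih]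
        _ = (-1 : A) ^ n * (kleinFactor γ x * T * γ a i) := by
            rw [mul_assoc]
            exact (((Commute.neg_one_right (kleinFactor γ x)).pow_right n).left_comm _)

/-- The dressing prefactor. -/
noncomputable def dress (γ : Fin (2 * k) → Fin (2 * L) → A) (a : Fin (2 * k)) : A :=
  (((List.finRange (2 * k)).filter (fun b => decide (b < a))).map (kleinFactor γ)).prod

lemma count_filter_lt (a c : Fin (2 * k)) :
    ((List.finRange (2 * k)).filter (fun b => decide (b < c))).count a
      = if a < c then 1 else 0 := by
  by_cases h : a < c
  · rw [if_pos h]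
    exact List.count_eq_one_of_mem ((List.nodup_finRange _).filter _)
      (List.mem_filter.2 ⟨List.mem_finRange a, by simp [h]⟩)
  · rw [if_neg h, List.count_eq_zero]
    intro hmem
    exact h (by simpa using (List.mem_filter.1 hmem).2)

include hsame hdiff in
lemma gamma_dress (hL : 1 ≤ L) (a c : Fin (2 * k)) (i : Fin (2 * L)) :
    γ a i * dress γ c = (-1 : A) ^ (if a < c then 1 else 0) * (dress γ c * γ a i) := by
  unfold dress
  rw [move2 hsame hdiff hL, count_filter_lt]

include hdiff in
lemma comm_dress_dress (b c : Fin (2 * k)) : Commute (dress γ b) (dress γ c) := by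
  apply Commute.list_prod_right
  intro x hx
  obtain ⟨u, -, rfl⟩ := List.mem_map.1 hx
  apply Commute.list_prod_left
  intro y hy
  obtain ⟨v, -, rfl⟩ := List.mem_map.1 hy
  exact comm_klein_klein hdiff v u

include hsame hdiff in
lemma dress_sq (c : Fin (2 * k)) : dress γ c * dress γ c = 1 := by
  unfold dress
  generalize ((List.finRange (2 * k)).filter (fun b => decide (b < c))) = l
  induction l with
  | nil => simp
  | cons x t ih =>
    rw [List.map_cons, List.prod_cons]
    set T := (t.map (kleinFactor γ)).prod with hTdef
    have hcT : Commute (kleinFactor γ x) T := by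
      apply Commute.list_prod_right
      intro y hy
      obtain ⟨v, -, rfl⟩ := List.mem_map.1 hy
      exact comm_klein_klein hdiff x v
    calc kleinFactor γ x * T * (kleinFactor γ x * T)
        = kleinFactor γ x * (T * kleinFactor γ x) * T := by
          rw [mul_assoc, mul_assoc, mul_assoc]
      _ = kleinFactor γ x * (kleinFactor γ x * T) * T := by rw [← hcT.eq]
      _ = (kleinFactor γ x * kleinFactor γ x) * (T * T) := by
          rw [mul_assoc, mul_assoc, mul_assoc]
      _ = 1 := by rw [klein_sq hsame, one_mul, ih]

include hsame hdiff in
lemma off_diag (hL : 1 ≤ L) {a b : Fin (2 * k)} (hab : a < b) (i j : Fin (2 * L)) :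
    dressedMode γ a i * dressedMode γ b j + dressedMode γ b j * dressedMode γ a i = 0 := by
  have hXa : dressedMode γ a i = dress γ a * γ a i := rfl
  have hXb : dressedMode γ b j = dress γ b * γ b j := rfl
  have h1 : γ a i * dress γ b = -(dress γ b * γ a i) := by
    rw [gamma_dress hsame hdiff hL, if_pos hab, pow_one, neg_one_mul]
  have h2 : γ b j * dress γ a = dress γ a * γ b j := by
    rw [gamma_dress hsame hdiff hL, if_neg (by exact fun h => absurd hab (asymm h)),
      pow_zero, one_mul]
  have h3 : Commute (dress γ a) (dress γ b) := comm_dress_dress hdiff a b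
  have h4 : γ a i * γ b j = γ b j * γ a i := hdiff a b hab.ne i j
  have e1 : dress γ a * γ a i * (dress γ b * γ b j)
      = -(dress γ a * (dress γ b * (γ a i * γ b j))) := by
    calc dress γ a * γ a i * (dress γ b * γ b j)
        = dress γ a * ((γ a i * dress γ b) * γ b j) := by rw [mul_assoc, mul_assoc]
      _ = dress γ a * (-(dress γ b * γ a i) * γ b j) := by rw [h1]
      _ = -(dress γ a * (dress γ b * (γ a i * γ b j))) := by
          rw [neg_mul, mul_neg, mul_assoc]
  have e2 : dress γ b * γ b j * (dress γ a * γ a i)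
      = dress γ a * (dress γ b * (γ a i * γ b j)) := by
    calc dress γ b * γ b j * (dress γ a * γ a i)
        = dress γ b * ((γ b j * dress γ a) * γ a i) := by rw [mul_assoc, mul_assoc]
      _ = dress γ b * (dress γ a * (γ b j * γ a i)) := by rw [h2, mul_assoc]
      _ = dress γ b * (dress γ a * (γ a i * γ b j)) := by rw [h4]
      _ = dress γ a * (dress γ b * (γ a i * γ b j)) := by
          rw [← mul_assoc, ← mul_assoc, ← h3.eq, mul_assoc, mul_assoc]
  rw [hXa, hXb, e1, e2, neg_add_cancel]

include hsame hdiff in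
lemma diag (hL : 1 ≤ L) (a : Fin (2 * k)) (i j : Fin (2 * L)) :
    dressedMode γ a i * dressedMode γ a j + dressedMode γ a j * dressedMode γ a i
      = if i = j then 2 else 0 := by
  have h2 : ∀ i : Fin (2 * L), γ a i * dress γ a = dress γ a * γ a i := fun i => by
    rw [gamma_dress hsame hdiff hL, if_neg (lt_irrefl a), pow_zero, one_mul]
  have key : ∀ i j : Fin (2 * L),
      dressedMode γ a i * dressedMode γ a j = γ a i * γ a j := by
    intro i j
    show dress γ a * γ a i * (dress γ a * γ a j) = _
    calc dress γ a * γ a i * (dress γ a * γ a j)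
        = dress γ a * ((γ a i * dress γ a) * γ a j) := by rw [mul_assoc, mul_assoc]
      _ = dress γ a * (dress γ a * (γ a i * γ a j)) := by rw [h2, mul_assoc]
      _ = (dress γ a * dress γ a) * (γ a i * γ a j) := by rw [← mul_assoc]
      _ = γ a i * γ a j := by rw [dress_sq hsame hdiff, one_mul]
  rw [key, key, hsame]

end Aux

/-- Let `A` be a unital associative ℂ-algebra, `k, L ≥ 1`, and
`γ̃ : Fin (2k) × Fin (2L) → A` (replica index first) satisfy: within each replica the
modes anticommute like Majorana modes, and modes on different replicas commute.  Then
the Klein-dressed modes `γ̄_i^a` form a genuine Majorana family: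
`γ̄_i^a γ̄_j^b + γ̄_j^b γ̄_i^a = 2 δ_{ab} δ_{ij} · 1`. -/
theorem stmt10 {A : Type*} [Ring A] [Algebra ℂ A] {k L : ℕ} (hk : 1 ≤ k) (hL : 1 ≤ L)
    (γ : Fin (2 * k) → Fin (2 * L) → A)
    (hsame : ∀ (a : Fin (2 * k)) (i j : Fin (2 * L)),
      γ a i * γ a j + γ a j * γ a i = if i = j then 2 else 0)
    (hdiff : ∀ (a b : Fin (2 * k)), a ≠ b → ∀ (i j : Fin (2 * L)),
      γ a i * γ b j = γ b j * γ a i) :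
    ∀ (a b : Fin (2 * k)) (i j : Fin (2 * L)),
      dressedMode γ a i * dressedMode γ b j + dressedMode γ b j * dressedMode γ a i
        = if a = b ∧ i = j then 2 else 0 := by
  intro a b i j
  rcases eq_or_ne a b with rfl | hab
  · rw [diag hsame hdiff hL a i j]
    simp
  · rw [if_neg (by simp [hab])]
    rcases lt_or_gt_of_ne hab with h | h
    · exact off_diag hsame hdiff hL h i j
    · rw [add_comm]
      exact off_diag hsame hdiff hL h j i
end

section
/- Let k ≥ 1 and n ≥ 1. Let w : {1,…,n} → ℝ^k be such that every coordinate of every w_i lies in {−1/2, +1/2}, and let ρ ∈ ℝ^k be the vector with coordinates ρ_m = k − m for m = 1,…,k. Define F(w) = ‖Σ_{i=1}^n w_i‖² + 2 ⟨Σ_{i=1}^n w_i, ρ⟩, where ‖·‖ and ⟨·,·⟩ are the standard Euclidean norm and inner product on ℝ^k. Then F(w) ≤ n² k / 4 + n k (k−1) / 2, and equality holds if and only if there exists s ∈ {−1/2, +1/2} such that for every i: w_i(m) = 1/2 for all m ≤ k−1 and w_i(k) = s (in particular all w_i are equal). -/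
private lemma gaussR (k : ℕ) : ∑ i ∈ Finset.range k, (i : ℝ) = k * (k - 1) / 2 := by
  induction k with
  | zero => simp
  | succ k ih =>
    rw [Finset.sum_range_succ, ih]
    push_cast
    ring

private lemma keylem {nr S r : ℝ} (h1 : S ≤ nr / 2) (h2 : -(nr / 2) ≤ S) (h3 : 0 ≤ r) :
    S ^ 2 + 2 * (S * r) ≤ nr ^ 2 / 4 + nr * r ∧
    (S ^ 2 + 2 * (S * r) = nr ^ 2 / 4 + nr * r ↔ S = nr / 2 ∨ (r = 0 ∧ S = -(nr / 2))) := by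
  refine ⟨?_, ?_, ?_⟩
  · nlinarith [mul_nonneg (by linarith : (0:ℝ) ≤ nr / 2 - S)
      (by linarith : (0:ℝ) ≤ nr / 2 + S + 2 * r)]
  · intro h
    have hfac : (nr / 2 - S) * (nr / 2 + S + 2 * r) = 0 := by linear_combination -h
    rcases mul_eq_zero.mp hfac with ha | hb
    · left; linarith
    · right; constructor <;> linarith
  · rintro (h | ⟨h0, h⟩)
    · rw [h]; ring
    · rw [h, h0]; ring

/-- Weight-maximization for the `so(2k)` spinor weights.  Let `k, n ≥ 1` and let
`w : Fin n → ℝ^k` have all coordinates in `{−1/2, +1/2}`.  With the Weyl vector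
`ρ_m = k − m` (for `m = 1, …, k`, i.e. `ρ m = k − 1 − m` in `0`-indexed form) and
`F(w) = ‖Σᵢ wᵢ‖² + 2⟨Σᵢ wᵢ, ρ⟩` (standard Euclidean norm and inner product written
in coordinates), we have `F(w) ≤ n²k/4 + nk(k−1)/2`, with equality iff there is
`s ∈ {−1/2, +1/2}` such that for every `i`: `wᵢ(m) = 1/2` for all `m ≤ k−1` and
`wᵢ(k) = s` (in particular all `wᵢ` are equal). -/
theorem stmt15 {k n : ℕ} (hk : 1 ≤ k) (hn : 1 ≤ n)
    (w : Fin n → Fin k → ℝ)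
    (hw : ∀ i m, w i m = 1 / 2 ∨ w i m = -(1 / 2)) :
    (∑ m : Fin k, (∑ i, w i m) ^ 2)
        + 2 * (∑ m : Fin k, (∑ i, w i m) * ((k : ℝ) - 1 - ((m : ℕ) : ℝ)))
      ≤ (n : ℝ) ^ 2 * k / 4 + (n : ℝ) * k * ((k : ℝ) - 1) / 2
    ∧ ((∑ m : Fin k, (∑ i, w i m) ^ 2)
          + 2 * (∑ m : Fin k, (∑ i, w i m) * ((k : ℝ) - 1 - ((m : ℕ) : ℝ)))
        = (n : ℝ) ^ 2 * k / 4 + (n : ℝ) * k * ((k : ℝ) - 1) / 2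
      ↔ ∃ s : ℝ, (s = 1 / 2 ∨ s = -(1 / 2)) ∧
          ∀ i, (∀ m : Fin k, (m : ℕ) < k - 1 → w i m = 1 / 2)
            ∧ w i ⟨k - 1, by omega⟩ = s) := by
  classical
  have hconst : ∀ c : ℝ, (∑ _i : Fin n, c) = n * c := by
    intro c; simp [Finset.sum_const, nsmul_eq_mul]
  have hle : ∀ m i, w i m ≤ 1 / 2 := by
    intro m i; rcases hw i m with h | h <;> rw [h] <;> norm_num
  have hge : ∀ m i, -(1 / 2 : ℝ) ≤ w i m := by
    intro m i; rcases hw i m with h | h <;> rw [h] <;> norm_num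
  have hSle : ∀ m, (∑ i, w i m) ≤ (n : ℝ) / 2 := by
    intro m
    have h1 : (∑ i : Fin n, w i m) ≤ ∑ _i : Fin n, (1 / 2 : ℝ) :=
      Finset.sum_le_sum (fun i _ => hle m i)
    rw [hconst] at h1
    linarith
  have hSge : ∀ m, -((n : ℝ) / 2) ≤ (∑ i, w i m) := by
    intro m
    have h1 : (∑ _i : Fin n, (-(1 / 2) : ℝ)) ≤ ∑ i : Fin n, w i m :=
      Finset.sum_le_sum (fun i _ => hge m i)
    rw [hconst] at h1
    linarith
  have hρnn : ∀ m : Fin k, (0:ℝ) ≤ (k : ℝ) - 1 - ((m : ℕ) : ℝ) := by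
    intro m
    have h1 : (m : ℕ) + 1 ≤ k := m.is_lt
    have h2 : ((m : ℕ) : ℝ) + 1 ≤ (k : ℝ) := by exact_mod_cast h1
    linarith
  -- equality characterizations for the coordinate sums
  have hStop : ∀ m, (∑ i, w i m) = (n : ℝ) / 2 ↔ ∀ i, w i m = 1 / 2 := by
    intro m
    have h := Finset.sum_eq_sum_iff_of_le (s := (Finset.univ : Finset (Fin n)))
      (f := fun i => w i m) (g := fun _ => (1 / 2 : ℝ)) (fun i _ => hle m i)
    rw [hconst] at h
    constructor
    · intro hS i
      exact h.mp (by rw [hS]; ring) i (Finset.mem_univ i)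
    · intro hall
      rw [h.mpr (fun i _ => hall i)]; ring
  have hSbot : ∀ m, (∑ i, w i m) = -((n : ℝ) / 2) ↔ ∀ i, w i m = -(1 / 2) := by
    intro m
    have h := Finset.sum_eq_sum_iff_of_le (s := (Finset.univ : Finset (Fin n)))
      (f := fun _ => (-(1 / 2) : ℝ)) (g := fun i => w i m) (fun i _ => hge m i)
    rw [hconst] at h
    constructor
    · intro hS i
      exact (h.mp (by rw [hS]; ring) i (Finset.mem_univ i)).symm
    · intro hall
      rw [← h.mpr (fun i _ => (hall i).symm)]; ring
  have key : ∀ m : Fin k,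
      (∑ i, w i m) ^ 2 + 2 * ((∑ i, w i m) * ((k : ℝ) - 1 - ((m : ℕ) : ℝ)))
        ≤ (n : ℝ) ^ 2 / 4 + (n : ℝ) * ((k : ℝ) - 1 - ((m : ℕ) : ℝ)) :=
    fun m => (keylem (hSle m) (hSge m) (hρnn m)).1
  have keyiff : ∀ m : Fin k,
      ((∑ i, w i m) ^ 2 + 2 * ((∑ i, w i m) * ((k : ℝ) - 1 - ((m : ℕ) : ℝ)))
          = (n : ℝ) ^ 2 / 4 + (n : ℝ) * ((k : ℝ) - 1 - ((m : ℕ) : ℝ))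
        ↔ (∑ i, w i m) = (n : ℝ) / 2
          ∨ ((k : ℝ) - 1 - ((m : ℕ) : ℝ) = 0 ∧ (∑ i, w i m) = -((n : ℝ) / 2))) :=
    fun m => (keylem (hSle m) (hSge m) (hρnn m)).2
  -- sum rearrangement
  have hLHS : (∑ m : Fin k, (∑ i, w i m) ^ 2)
        + 2 * (∑ m : Fin k, (∑ i, w i m) * ((k : ℝ) - 1 - ((m : ℕ) : ℝ)))
      = ∑ m : Fin k,
          ((∑ i, w i m) ^ 2 + 2 * ((∑ i, w i m) * ((k : ℝ) - 1 - ((m : ℕ) : ℝ)))) := by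
    rw [Finset.mul_sum, ← Finset.sum_add_distrib]
  have hρsum : (∑ m : Fin k, ((k : ℝ) - 1 - ((m : ℕ) : ℝ)))
      = (k : ℝ) * ((k : ℝ) - 1) / 2 := by
    rw [Finset.sum_sub_distrib, Finset.sum_const, Finset.card_univ, Fintype.card_fin,
      Fin.sum_univ_eq_sum_range (fun i => (i : ℝ)), gaussR]
    simp only [nsmul_eq_mul]; ring
  have hRHS : (∑ m : Fin k, ((n : ℝ) ^ 2 / 4 + (n : ℝ) * ((k : ℝ) - 1 - ((m : ℕ) : ℝ))))
      = (n : ℝ) ^ 2 * k / 4 + (n : ℝ) * k * ((k : ℝ) - 1) / 2 := by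
    rw [Finset.sum_add_distrib, Finset.sum_const, Finset.card_univ, Fintype.card_fin,
      ← Finset.mul_sum, hρsum, nsmul_eq_mul]
    ring
  have hmk : (k - 1 : ℕ) < k := by omega
  have hcast : ((k - 1 : ℕ) : ℝ) = (k : ℝ) - 1 := by
    push_cast [hk]; ring
  have hρmk : (k : ℝ) - 1 - (((⟨k - 1, hmk⟩ : Fin k) : ℕ) : ℝ) = 0 := by
    simp only [Fin.val_mk, hcast]; ring
  have hρpos : ∀ m : Fin k, (m : ℕ) < k - 1 → (0:ℝ) < (k : ℝ) - 1 - ((m : ℕ) : ℝ) := by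
    intro m hm
    have h3 : (m : ℕ) + 2 ≤ k := by omega
    have h4 : ((m : ℕ) : ℝ) + 2 ≤ (k : ℝ) := by exact_mod_cast h3
    linarith
  constructor
  · calc (∑ m : Fin k, (∑ i, w i m) ^ 2)
          + 2 * (∑ m : Fin k, (∑ i, w i m) * ((k : ℝ) - 1 - ((m : ℕ) : ℝ)))
        = _ := hLHS
      _ ≤ ∑ m : Fin k, ((n : ℝ) ^ 2 / 4 + (n : ℝ) * ((k : ℝ) - 1 - ((m : ℕ) : ℝ))) :=
          Finset.sum_le_sum (fun m _ => key m)
      _ = _ := hRHS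
  · rw [hLHS, ← hRHS, Finset.sum_eq_sum_iff_of_le (fun m _ => key m)]
    constructor
    · intro h
      have hall : ∀ m : Fin k, (∑ i, w i m) = (n : ℝ) / 2
          ∨ ((k : ℝ) - 1 - ((m : ℕ) : ℝ) = 0 ∧ (∑ i, w i m) = -((n : ℝ) / 2)) :=
        fun m => (keyiff m).mp (h m (Finset.mem_univ m))
      have hlt : ∀ (i : Fin n) (m : Fin k), (m : ℕ) < k - 1 → w i m = 1 / 2 := by
        intro i m hm
        rcases hall m with hS | ⟨h0, _⟩
        · exact (hStop m).mp hS i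
        · exact absurd h0 (ne_of_gt (hρpos m hm))
      rcases hall ⟨k - 1, hmk⟩ with hS | ⟨_, hS⟩
      · exact ⟨1 / 2, Or.inl rfl,
          fun i => ⟨fun m hm => hlt i m hm, (hStop _).mp hS i⟩⟩
      · exact ⟨-(1 / 2), Or.inr rfl,
          fun i => ⟨fun m hm => hlt i m hm, (hSbot _).mp hS i⟩⟩
    · rintro ⟨s, hs, hws⟩ m _
      refine (keyiff m).mpr ?_
      rcases Nat.lt_or_ge (m : ℕ) (k - 1) with hm | hm
      · exact Or.inl ((hStop m).mpr (fun i => (hws i).1 m hm))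
      · have hmeq : m = ⟨k - 1, hmk⟩ := by
          apply Fin.ext
          have := m.is_lt
          simp only [Fin.val_mk]; omega
        subst hmeq
        rcases hs with hs | hs
        · exact Or.inl ((hStop _).mpr (fun i => hs ▸ (hws i).2))
        · exact Or.inr ⟨hρmk, (hSbot _).mpr (fun i => hs ▸ (hws i).2)⟩
end
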